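/- The function f(t, b, s) = √(2/π) t^{−3/2} (2s − b) exp(−(2s − b)²/(2t) + μ(b − μt/2)), defined for t > 0, s ≥ 0, b ≤ s, is a probability density: ∫_0^∞ ∫_{−∞}^s f(t, b, s) db ds = 1 for every fixed t > 0 and μ ∈ ℝ. -/

import Mathlib

open Set MeasureTheory

/-- Joint density of `(B_t^μ, S_t^μ)` for Brownian motion with drift `μ`. -/
noncomputable def jointDensity (μ t b s : ℝ) : ℝ :=
  Real.sqrt (2 / Real.pi) * t ^ (-(3:ℝ)/2) * (2 * s - b) *
    Real.exp (-(2 * s - b) ^ 2 / (2 * t) + μ * (b - μ * t / 2))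

open Filter Real Topology

section Helpers

lemma integrable_gauss {v : ℝ} (hv : 0 < v) (c : ℝ) :
    Integrable (fun x : ℝ => Real.exp (-(x - c) ^ 2 / v)) := by
  have h := (integrable_exp_neg_mul_sq (b := 1 / v) (by positivity)).comp_sub_right c
  have heq : (fun x : ℝ => Real.exp (-(1 / v) * (x - c) ^ 2))
      = fun x : ℝ => Real.exp (-(x - c) ^ 2 / v) := by
    funext x; congr 1; field_simp
  rwa [heq] at h

lemma integrable_mul_gauss {v : ℝ} (hv : 0 < v) (c : ℝ) :
    Integrable (fun x : ℝ => (x - c) * Real.exp (-(x - c) ^ 2 / v)) := by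
  have h := (integrable_mul_exp_neg_mul_sq (b := 1 / v) (by positivity)).comp_sub_right c
  have heq : (fun x : ℝ => (x - c) * Real.exp (-(1 / v) * (x - c) ^ 2))
      = fun x : ℝ => (x - c) * Real.exp (-(x - c) ^ 2 / v) := by
    funext x; congr 2; field_simp
  rwa [heq] at h

lemma integral_gauss {v : ℝ} (hv : 0 < v) :
    ∫ x : ℝ, Real.exp (-x ^ 2 / v) = Real.sqrt (Real.pi * v) := by
  have h := integral_gaussian (1 / v)
  have h1 : (fun x : ℝ => Real.exp (-(1 / v) * x ^ 2)) = fun x : ℝ => Real.exp (-x ^ 2 / v) := by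
    funext x; congr 1; field_simp
  rw [h1] at h
  rw [h, show Real.pi / (1 / v) = Real.pi * v by field_simp]

lemma tendsto_sq_shift_atTop (c : ℝ) :
    Tendsto (fun x : ℝ => (x - c) ^ 2) atTop atTop := by
  have := (tendsto_pow_atTop (two_ne_zero)).comp (tendsto_atTop_add_const_right atTop (-c) tendsto_id)
  simpa [Function.comp_def, sub_eq_add_neg] using this

lemma tendsto_sq_shift_atBot (c : ℝ) :
    Tendsto (fun x : ℝ => (x - c) ^ 2) atBot atTop := by
  have h1 : Tendsto (fun x : ℝ => -(x - c)) atBot atTop := by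
    have h0 := tendsto_neg_atBot_atTop.comp (tendsto_atBot_add_const_right atBot (-c) tendsto_id)
    have heq : (Neg.neg ∘ fun x : ℝ => id x + -c) = fun x : ℝ => -(x - c) := by
      funext x; simp [Function.comp, sub_eq_add_neg]
    rwa [heq] at h0
  have := h1.atTop_mul_atTop₀ h1
  have heq : (fun x : ℝ => -(x - c) * -(x - c)) = fun x : ℝ => (x - c) ^ 2 := by
    funext x; ring
  rwa [heq] at this

lemma tendsto_gauss_of_sq {v : ℝ} (hv : 0 < v) (c : ℝ) {l : Filter ℝ}
    (h : Tendsto (fun x : ℝ => (x - c) ^ 2) l atTop) :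
    Tendsto (fun x : ℝ => Real.exp (-(x - c) ^ 2 / v)) l (𝓝 0) := by
  have h2 : Tendsto (fun x : ℝ => -((x - c) ^ 2 / v)) l atBot :=
    tendsto_neg_atTop_atBot.comp (Tendsto.atTop_div_const hv h)
  have h3 := Real.tendsto_exp_atBot.comp h2
  have heq : (Real.exp ∘ fun x : ℝ => -((x - c) ^ 2 / v))
      = fun x : ℝ => Real.exp (-(x - c) ^ 2 / v) := by
    funext x; simp [Function.comp, neg_div]
  rwa [heq] at h3

lemma tendsto_gauss_atTop {v : ℝ} (hv : 0 < v) (c : ℝ) :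
    Tendsto (fun x : ℝ => Real.exp (-(x - c) ^ 2 / v)) atTop (𝓝 0) :=
  tendsto_gauss_of_sq hv c (tendsto_sq_shift_atTop c)

lemma tendsto_gauss_atBot {v : ℝ} (hv : 0 < v) (c : ℝ) :
    Tendsto (fun x : ℝ => Real.exp (-(x - c) ^ 2 / v)) atBot (𝓝 0) :=
  tendsto_gauss_of_sq hv c (tendsto_sq_shift_atBot c)

end Helpers

noncomputable def gaussCDF (t a : ℝ) : ℝ := ∫ x in Iic a, Real.exp (-x ^ 2 / (2 * t))

section GaussCDF

variable {t : ℝ}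

lemma integrable_gauss0 (ht : 0 < t) : Integrable (fun x : ℝ => Real.exp (-x ^ 2 / (2 * t))) := by
  have := integrable_gauss (by linarith : (0:ℝ) < 2 * t) 0
  simpa using this

lemma continuous_gauss0 : Continuous (fun x : ℝ => Real.exp (-x ^ 2 / (2 * t))) := by
  fun_prop

lemma hasDerivAt_gaussCDF (ht : 0 < t) (a : ℝ) :
    HasDerivAt (gaussCDF t) (Real.exp (-a ^ 2 / (2 * t))) a := by
  have hint := integrable_gauss0 ht
  have key : ∀ y : ℝ, gaussCDF t y
      = gaussCDF t 0 + ∫ x in (0:ℝ)..y, Real.exp (-x ^ 2 / (2 * t)) := by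
    intro y
    rw [← intervalIntegral.integral_Iic_sub_Iic hint.integrableOn hint.integrableOn]
    unfold gaussCDF; ring
  have hd : HasDerivAt (fun y : ℝ => gaussCDF t 0 + ∫ x in (0:ℝ)..y, Real.exp (-x ^ 2 / (2 * t)))
      (Real.exp (-a ^ 2 / (2 * t))) a := by
    apply HasDerivAt.const_add
    exact intervalIntegral.integral_hasDerivAt_right hint.intervalIntegrable
      (continuous_gauss0.stronglyMeasurable.stronglyMeasurableAtFilter)
      continuous_gauss0.continuousAt
  exact hd.congr_of_eventuallyEq (Filter.Eventually.of_forall key)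

lemma tendsto_gaussCDF_atBot (ht : 0 < t) : Tendsto (gaussCDF t) atBot (𝓝 0) := by
  have hint := integrable_gauss0 ht
  have h := intervalIntegral_tendsto_integral_Iic 0 hint.integrableOn tendsto_id
  have h2 : Tendsto (fun y : ℝ => gaussCDF t 0 - ∫ x in y..(0:ℝ), Real.exp (-x ^ 2 / (2 * t)))
      atBot (𝓝 (gaussCDF t 0 - gaussCDF t 0)) := tendsto_const_nhds.sub h
  rw [sub_self] at h2
  apply h2.congr
  intro y
  rw [← intervalIntegral.integral_Iic_sub_Iic hint.integrableOn hint.integrableOn]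
  unfold gaussCDF; ring

lemma tendsto_gaussCDF_atTop (ht : 0 < t) :
    Tendsto (gaussCDF t) atTop (𝓝 (Real.sqrt (Real.pi * (2 * t)))) := by
  have hint := integrable_gauss0 ht
  have h := intervalIntegral_tendsto_integral_Ioi 0 hint.integrableOn tendsto_id
  have h2 : Tendsto (fun y : ℝ => gaussCDF t 0 + ∫ x in (0:ℝ)..y, Real.exp (-x ^ 2 / (2 * t)))
      atTop (𝓝 (gaussCDF t 0 + ∫ x in Ioi 0, Real.exp (-x ^ 2 / (2 * t)))) :=
    tendsto_const_nhds.add h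
  have h3 : gaussCDF t 0 + (∫ x in Ioi (0:ℝ), Real.exp (-x ^ 2 / (2 * t)))
      = Real.sqrt (Real.pi * (2 * t)) := by
    unfold gaussCDF
    rw [intervalIntegral.integral_Iic_add_Ioi hint.integrableOn hint.integrableOn,
      integral_gauss (by linarith : (0:ℝ) < 2 * t)]
  rw [h3] at h2
  apply h2.congr
  intro y
  rw [← intervalIntegral.integral_Iic_sub_Iic hint.integrableOn hint.integrableOn]
  unfold gaussCDF; ring

lemma gaussCDF_nonneg (a : ℝ) : 0 ≤ gaussCDF t a :=
  setIntegral_nonneg measurableSet_Iic fun x _ => (Real.exp_nonneg _)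

lemma gaussCDF_le (ht : 0 < t) {a : ℝ} (ha : a ≤ 0) :
    gaussCDF t a ≤ Real.exp (-a ^ 2 / (4 * t)) * Real.sqrt (Real.pi * (4 * t)) := by
  have h4t : (0:ℝ) < 4 * t := by linarith
  have hint := integrable_gauss0 ht
  have hint4 : Integrable (fun x : ℝ => Real.exp (-x ^ 2 / (4 * t))) := by
    have := integrable_gauss h4t 0; simpa using this
  have step1 : gaussCDF t a
      ≤ ∫ x in Iic a, Real.exp (-a ^ 2 / (4 * t)) * Real.exp (-x ^ 2 / (4 * t)) := by
    apply setIntegral_mono_on hint.integrableOn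
      ((hint4.const_mul _).integrableOn) measurableSet_Iic
    intro x hx
    rw [← Real.exp_add]
    apply Real.exp_le_exp.2
    have hx2 : a ^ 2 ≤ x ^ 2 := by nlinarith [mem_Iic.1 hx]
    rw [← sub_nonneg]
    have : -a ^ 2 / (4 * t) + -x ^ 2 / (4 * t) - -x ^ 2 / (2 * t)
        = (x ^ 2 - a ^ 2) / (4 * t) := by field_simp; ring
    rw [this]
    exact div_nonneg (by linarith) h4t.le
  have step2 : ∫ x in Iic a, Real.exp (-a ^ 2 / (4 * t)) * Real.exp (-x ^ 2 / (4 * t))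
      ≤ Real.exp (-a ^ 2 / (4 * t)) * Real.sqrt (Real.pi * (4 * t)) := by
    rw [integral_const_mul]
    apply mul_le_mul_of_nonneg_left _ (Real.exp_nonneg _)
    calc ∫ x in Iic a, Real.exp (-x ^ 2 / (4 * t))
        ≤ ∫ x : ℝ, Real.exp (-x ^ 2 / (4 * t)) := by
          apply setIntegral_le_integral hint4
          filter_upwards with x using Real.exp_nonneg _
      _ = Real.sqrt (Real.pi * (4 * t)) := integral_gauss h4t
  linarith

end GaussCDF

lemma inner_eq (μ t : ℝ) (ht : 0 < t) (s : ℝ) :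
    ∫ b in Iic s, jointDensity μ t b s
      = Real.sqrt (2 / Real.pi) * t ^ (-(3:ℝ)/2) * t * Real.exp (-(s - μ*t)^2/(2*t))
        - Real.sqrt (2 / Real.pi) * t ^ (-(3:ℝ)/2) * (μ*t) * Real.exp (2*μ*s)
            * gaussCDF t (-s - μ*t) := by
  have ht' : t ≠ 0 := ht.ne'
  have h2t : (0:ℝ) < 2 * t := by linarith
  set C : ℝ := Real.sqrt (2 / Real.pi) * t ^ (-(3:ℝ)/2) with hC
  set c : ℝ := 2 * s + μ * t with hc
  set F : ℝ → ℝ := fun b =>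
    C * t * Real.exp (-(μ^2*t)/2) * Real.exp (-(2*s-b)^2/(2*t) + μ*b)
      - C * (μ*t) * Real.exp (2*μ*s) * gaussCDF t (b - c) with hF
  have hderiv : ∀ b ∈ Iic s, HasDerivAt F (jointDensity μ t b s) b := by
    intro b _
    have hP : HasDerivAt (fun b : ℝ => -(2*s-b)^2/(2*t) + μ*b) ((2*s-b)/t + μ) b := by
      have h1 : HasDerivAt (fun b : ℝ => 2*s - b) (-1) b := by
        simpa using (hasDerivAt_id b).const_sub (2*s)
      have h2 := ((h1.pow 2).div_const (2*t)).neg.add ((hasDerivAt_id b).const_mul μ)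
      convert h2 using 1
      · rfl
      · rfl
      · funext x
        try simp only [id_eq]
        simp only [Pi.add_apply, Pi.neg_apply, Pi.pow_apply]
        ring
      · try simp only [id_eq]
        push_cast
        field_simp
    have hE := hP.exp
    have hG : HasDerivAt (fun b : ℝ => gaussCDF t (b - c))
        (Real.exp (-(b - c)^2/(2*t))) b := by
      have h0 := (hasDerivAt_gaussCDF ht (b - c)).comp b ((hasDerivAt_id b).sub_const c)
      simpa [Function.comp_def] using h0
    have htotal := (hE.const_mul (C * t * Real.exp (-(μ^2*t)/2))).sub
      (hG.const_mul (C * (μ*t) * Real.exp (2*μ*s)))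
    convert htotal using 1
    · rfl
    · rfl
    · rfl
    rw [show Real.exp (-(b - c)^2/(2*t))
        = Real.exp (-(2*s-b)^2/(2*t) + μ*b) * (Real.exp (-(μ^2*t)/2) * Real.exp (-(2*μ*s)))
        from by rw [← Real.exp_add, ← Real.exp_add]; congr 1; rw [hc]; field_simp; ring]
    rw [show Real.exp (-(2*μ*s)) = (Real.exp (2*μ*s))⁻¹ from Real.exp_neg _]
    unfold jointDensity
    rw [show Real.exp (-(2*s-b)^2/(2*t) + μ*(b - μ*t/2))
        = Real.exp (-(2*s-b)^2/(2*t) + μ*b) * Real.exp (-(μ^2*t)/2) from by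
      rw [← Real.exp_add]; congr 1; ring]
    rw [← hC]
    field_simp
    ring
  have hjint : Integrable (fun b => jointDensity μ t b s) := by
    have h1 := integrable_mul_gauss h2t c
    have h2 := integrable_gauss h2t c
    have h3 := (h1.const_mul (-(C * Real.exp (2*μ*s)))).add
      (h2.const_mul (-(C * Real.exp (2*μ*s)) * (μ*t)))
    apply h3.congr
    filter_upwards with b
    simp only [Pi.add_apply]
    unfold jointDensity
    rw [show Real.exp (-(2*s-b)^2/(2*t) + μ*(b - μ*t/2))
        = Real.exp (-(b - c)^2/(2*t)) * Real.exp (2*μ*s) from by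
      rw [← Real.exp_add]; congr 1; rw [hc]; field_simp; ring]
    rw [← hC, hc]
    ring
  have hbot : Tendsto F atBot (𝓝 0) := by
    have hA : Tendsto (fun b : ℝ =>
        C * t * Real.exp (-(μ^2*t)/2) * Real.exp (-(2*s-b)^2/(2*t) + μ*b)) atBot (𝓝 0) := by
      have h0 := (tendsto_gauss_atBot h2t c).const_mul
        (C * t * Real.exp (-(μ^2*t)/2) * Real.exp (2*μ*s + μ^2*t/2))
      rw [mul_zero] at h0
      apply h0.congr
      intro b
      rw [show Real.exp (-(2*s-b)^2/(2*t) + μ*b)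
          = Real.exp (-(b - c)^2/(2*t)) * Real.exp (2*μ*s + μ^2*t/2) from by
        rw [← Real.exp_add]; congr 1; rw [hc]; field_simp; ring]
      ring
    have hB0 := (tendsto_gaussCDF_atBot ht).comp
      (tendsto_atBot_add_const_right atBot (-c) tendsto_id)
    have hB : Tendsto (fun b : ℝ => C * (μ*t) * Real.exp (2*μ*s) * gaussCDF t (b - c))
        atBot (𝓝 0) := by
      have h1 := hB0.const_mul (C * (μ*t) * Real.exp (2*μ*s))
      rw [mul_zero] at h1
      apply h1.congr
      intro b
      simp [Function.comp, sub_eq_add_neg]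
    have := hA.sub hB
    rw [sub_zero] at this
    exact this
  have key := integral_Iic_of_hasDerivAt_of_tendsto' hderiv hjint.integrableOn hbot
  rw [key, sub_zero]
  show C * t * Real.exp (-(μ^2*t)/2) * Real.exp (-(2*s-s)^2/(2*t) + μ*s)
      - C * (μ*t) * Real.exp (2*μ*s) * gaussCDF t (s - c) = _
  rw [show s - c = -s - μ*t from by rw [hc]; ring]
  rw [mul_assoc (C * t)]
  rw [show Real.exp (-(μ^2*t)/2) * Real.exp (-(2*s-s)^2/(2*t) + μ*s)
      = Real.exp (-(s - μ*t)^2/(2*t)) from by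
    rw [← Real.exp_add]; congr 1; field_simp; ring]

/-- the function `f(t, b, s)` integrates to one:
`∫_0^∞ ∫_{-∞}^s f(t, b, s) db ds = 1` for every `t > 0` and `μ ∈ ℝ`. -/
theorem jointDensity_integrates_to_one (μ t : ℝ) (ht : 0 < t) :
    ∫ s in Ioi (0:ℝ), (∫ b in Iic s, jointDensity μ t b s) = 1 := by
  have ht' : t ≠ 0 := ht.ne'
  have h2t : (0:ℝ) < 2*t := by linarith
  have h4t : (0:ℝ) < 4*t := by linarith
  set C : ℝ := Real.sqrt (2/Real.pi) * t ^ (-(3:ℝ)/2) with hC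
  have hC0 : 0 ≤ C := mul_nonneg (Real.sqrt_nonneg _) (Real.rpow_nonneg ht.le _)
  set P : ℝ → ℝ := fun s => C * t / 2 * gaussCDF t (s - μ*t)
      - C * t / 2 * Real.exp (2*μ*s) * gaussCDF t (-s - μ*t) with hP
  have hone : C * t / 2 * Real.sqrt (Real.pi * (2*t)) = 1 := by
    have h1 : Real.sqrt (2/Real.pi) * Real.sqrt (Real.pi*(2*t)) = 2 * t ^ ((1:ℝ)/2) := by
      rw [← Real.sqrt_mul (by positivity)]
      rw [show (2/Real.pi)*(Real.pi*(2*t)) = 2^2 * t from by field_simp]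
      rw [Real.sqrt_mul (by norm_num : (0:ℝ) ≤ 2^2), Real.sqrt_sq (by norm_num : (0:ℝ) ≤ 2),
        Real.sqrt_eq_rpow]
    have key : t ^ (-(3:ℝ)/2) * t ^ (1:ℝ) * t ^ ((1:ℝ)/2) = 1 := by
      rw [← Real.rpow_add ht, ← Real.rpow_add ht]
      norm_num
    calc C * t / 2 * Real.sqrt (Real.pi * (2*t))
        = (Real.sqrt (2/Real.pi) * Real.sqrt (Real.pi*(2*t))) * (t^(-(3:ℝ)/2) * t) / 2 := by
          rw [hC]; ring
      _ = (2 * t^((1:ℝ)/2)) * (t^(-(3:ℝ)/2) * t^(1:ℝ)) / 2 := by rw [h1, Real.rpow_one]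
      _ = t ^ (-(3:ℝ)/2) * t ^ (1:ℝ) * t ^ ((1:ℝ)/2) := by ring
      _ = 1 := key
  have hderiv : ∀ s ∈ Ici (0:ℝ), HasDerivAt P (∫ b in Iic s, jointDensity μ t b s) s := by
    intro s _
    rw [inner_eq μ t ht s, ← hC]
    have h1 : HasDerivAt (fun s : ℝ => gaussCDF t (s - μ*t))
        (Real.exp (-(s - μ*t)^2/(2*t))) s := by
      have h0 := (hasDerivAt_gaussCDF ht (s - μ*t)).comp s ((hasDerivAt_id s).sub_const (μ*t))
      simpa [Function.comp_def] using h0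
    have h2 : HasDerivAt (fun s : ℝ => Real.exp (2*μ*s)) (Real.exp (2*μ*s) * (2*μ)) s := by
      have h0 := ((hasDerivAt_id s).const_mul (2*μ)).exp
      simpa using h0
    have hl : HasDerivAt (fun s : ℝ => -s - μ*t) (-1) s := by
      simpa using ((hasDerivAt_id s).neg.sub_const (μ*t))
    have h3 : HasDerivAt (fun s : ℝ => gaussCDF t (-s - μ*t))
        (Real.exp (-(-s - μ*t)^2/(2*t)) * (-1)) s := by
      simpa [Function.comp_def] using (hasDerivAt_gaussCDF ht (-s - μ*t)).comp s hl
    have htotal := (h1.const_mul (C*t/2)).sub ((h2.mul h3).const_mul (C*t/2))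
    have hexp : Real.exp (2*μ*s) * Real.exp (-(-s - μ*t)^2/(2*t))
        = Real.exp (-(s - μ*t)^2/(2*t)) := by
      rw [← Real.exp_add]; congr 1; field_simp; ring
    convert htotal using 1
    · rfl
    · rfl
    · rw [hP]; funext x; simp only [Pi.sub_apply, Pi.mul_apply]; ring
    · linear_combination (-(C*t/2)) * hexp
  have hpos : ∀ s ∈ Ioi (0:ℝ), 0 ≤ ∫ b in Iic s, jointDensity μ t b s := by
    intro s hs
    apply setIntegral_nonneg measurableSet_Iic
    intro b hb
    have h1 : (0:ℝ) ≤ 2*s - b := by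
      have hb' : b ≤ s := hb
      have hs' : (0:ℝ) < s := hs
      linarith
    unfold jointDensity
    exact mul_nonneg (mul_nonneg (mul_nonneg (Real.sqrt_nonneg _)
      (Real.rpow_nonneg ht.le _)) h1) (Real.exp_nonneg _)
  have hterm1 : Tendsto (fun s : ℝ => C*t/2 * gaussCDF t (s - μ*t)) atTop
      (𝓝 (C*t/2 * Real.sqrt (Real.pi*(2*t)))) := by
    apply Tendsto.const_mul
    have h0 := (tendsto_gaussCDF_atTop ht).comp
      (tendsto_atTop_add_const_right atTop (-(μ*t)) tendsto_id)
    apply h0.congr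
    intro s
    simp [Function.comp, sub_eq_add_neg]
  have hterm2 : Tendsto (fun s : ℝ => C*t/2 * Real.exp (2*μ*s) * gaussCDF t (-s - μ*t))
      atTop (𝓝 0) := by
    apply squeeze_zero' (g := fun s : ℝ =>
      (C*t/2 * Real.sqrt (Real.pi*(4*t)) * Real.exp (2*μ^2*t)) * Real.exp (-(s - 3*μ*t)^2/(4*t)))
    · filter_upwards with s
      exact mul_nonneg (mul_nonneg (by positivity) (Real.exp_nonneg _)) (gaussCDF_nonneg _)
    · filter_upwards [eventually_ge_atTop (-(μ*t))] with s hs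
      have hle := gaussCDF_le ht (a := -s - μ*t) (by linarith)
      calc C*t/2 * Real.exp (2*μ*s) * gaussCDF t (-s - μ*t)
          ≤ C*t/2 * Real.exp (2*μ*s)
              * (Real.exp (-(-s - μ*t)^2/(4*t)) * Real.sqrt (Real.pi*(4*t))) := by
            apply mul_le_mul_of_nonneg_left hle (by positivity)
        _ = (C*t/2 * Real.sqrt (Real.pi*(4*t)) * Real.exp (2*μ^2*t))
              * Real.exp (-(s - 3*μ*t)^2/(4*t)) := by
            have h5 : Real.exp (2*μ*s) * Real.exp (-(-s - μ*t)^2/(4*t))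
                = Real.exp (2*μ^2*t) * Real.exp (-(s - 3*μ*t)^2/(4*t)) := by
              rw [← Real.exp_add, ← Real.exp_add]; congr 1; field_simp; ring
            linear_combination (C*t/2 * Real.sqrt (Real.pi*(4*t))) * h5
    · have h0 := (tendsto_gauss_atTop h4t (3*μ*t)).const_mul
        (C*t/2 * Real.sqrt (Real.pi*(4*t)) * Real.exp (2*μ^2*t))
      rwa [mul_zero] at h0
  have htend : Tendsto P atTop (𝓝 1) := by
    have h0 := hterm1.sub hterm2
    rw [sub_zero, hone] at h0
    exact h0
  have key := integral_Ioi_of_hasDerivAt_of_nonneg' hderiv hpos htend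
  have hP0 : P 0 = 0 := by
    show C * t / 2 * gaussCDF t (0 - μ*t)
        - C * t / 2 * Real.exp (2*μ*0) * gaussCDF t (-0 - μ*t) = 0
    rw [show (0:ℝ) - μ*t = -(μ*t) from by ring, show -(0:ℝ) - μ*t = -(μ*t) from by ring,
      show 2*μ*0 = (0:ℝ) from by ring, Real.exp_zero]
    ring
  rw [key, hP0, sub_zero]
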